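/- arXiv:2305.17587 — 5 statements merged into one kernel-verified Lean document; each statement's English description precedes it below -/
import Mathlib

section
/- Let p be a prime and let S ≤ Σ_{p²} be the subgroup generated by the p-cycles σ_i = (ip+1, …, (i+1)p) for i = 0,…,p−1 together with τ = τ_0⋯τ_{p−1} where τ_i = (i+1, i+1+p, …, i+1+p(p−1)). Let K be the subgroup generated by σ_0,…,σ_{p−1}. Then every element of S − K acts on {1,…,p²} without fixed points. -/
def sigma (p : ℕ) (i : ZMod p) : Equiv.Perm (ZMod p × ZMod p) where
  toFun x := (x.1, if x.1 = i then x.2 + 1 else x.2)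
  invFun x := (x.1, if x.1 = i then x.2 - 1 else x.2)
  left_inv x := by by_cases h : x.1 = i <;> simp [h] <;> exact Prod.ext h.symm rfl
  right_inv x := by by_cases h : x.1 = i <;> simp [h] <;> exact Prod.ext h.symm rfl

def tau (p : ℕ) : Equiv.Perm (ZMod p × ZMod p) :=
  (Equiv.addLeft (1 : ZMod p)).prodCongr (Equiv.refl (ZMod p))

def Ssub (p : ℕ) : Subgroup (Equiv.Perm (ZMod p × ZMod p)) :=
  Subgroup.closure (insert (tau p) (Set.range (sigma p)))

def Ksub (p : ℕ) : Subgroup (Equiv.Perm (ZMod p × ZMod p)) :=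
  Subgroup.closure (Set.range (sigma p))

lemma tau_apply (p : ℕ) (pt : ZMod p × ZMod p) : tau p pt = (1 + pt.1, pt.2) := rfl

lemma tau_inv_apply (p : ℕ) (pt : ZMod p × ZMod p) : (tau p)⁻¹ pt = (-1 + pt.1, pt.2) := rfl

lemma tau_zpow (p : ℕ) (n : ℤ) (pt : ZMod p × ZMod p) :
    ((tau p) ^ n) pt = (pt.1 + (n : ZMod p), pt.2) := by
  induction n using Int.induction_on generalizing pt with
  | zero => simp
  | succ n ih =>
      rw [zpow_add_one, Equiv.Perm.mul_apply, ih, tau_apply]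
      rw [Prod.mk.injEq]
      refine ⟨?_, rfl⟩
      push_cast
      ring
  | pred n ih =>
      rw [zpow_sub_one, Equiv.Perm.mul_apply, ih, tau_inv_apply]
      rw [Prod.mk.injEq]
      refine ⟨?_, rfl⟩
      push_cast
      ring

lemma K_fst (p : ℕ) {k : Equiv.Perm (ZMod p × ZMod p)} (hk : k ∈ Ksub p)
    (pt : ZMod p × ZMod p) : (k pt).1 = pt.1 := by
  induction hk using Subgroup.closure_induction generalizing pt with
  | mem x hx => obtain ⟨i, rfl⟩ := hx; rfl
  | one => rfl
  | mul a b _ _ ha hb => rw [Equiv.Perm.mul_apply, ha, hb]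
  | inv a _ ha =>
      have := ha (a⁻¹ pt)
      rw [show a (a⁻¹ pt) = pt by simp] at this
      exact this.symm

lemma sigma_apply (p : ℕ) (i : ZMod p) (pt : ZMod p × ZMod p) :
    sigma p i pt = (pt.1, if pt.1 = i then pt.2 + 1 else pt.2) := rfl

lemma conj_sigma (p : ℕ) (i : ZMod p) :
    tau p * sigma p i * (tau p)⁻¹ = sigma p (1 + i) := by
  refine Equiv.ext fun pt => ?_
  rw [Equiv.Perm.mul_apply, Equiv.Perm.mul_apply, tau_inv_apply, sigma_apply, tau_apply,
    sigma_apply]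
  have hc : (-1 + pt.1 = i) ↔ (pt.1 = 1 + i) :=
    ⟨fun h => by rw [← h]; ring, fun h => by rw [h]; ring⟩
  rw [Prod.mk.injEq]
  constructor
  · ring
  · simp only [hc]

lemma conj_sigma' (p : ℕ) (i : ZMod p) :
    (tau p)⁻¹ * sigma p i * tau p = sigma p (-1 + i) := by
  have := conj_sigma p (-1 + i)
  rw [show (1 : ZMod p) + (-1 + i) = i by ring] at this
  rw [← this]
  group

lemma conj_mem (p : ℕ) (t : Equiv.Perm (ZMod p × ZMod p))
    (ht : ∀ i, ∃ j, t * sigma p i * t⁻¹ = sigma p j) :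
    ∀ k ∈ Ksub p, t * k * t⁻¹ ∈ Ksub p := by
  intro k hk
  induction hk using Subgroup.closure_induction with
  | mem x hx =>
      obtain ⟨i, rfl⟩ := hx
      obtain ⟨j, hj⟩ := ht i
      rw [hj]
      exact Subgroup.subset_closure ⟨j, rfl⟩
  | one => simpa using Subgroup.one_mem _
  | mul a b _ _ ha hb =>
      have : t * (a * b) * t⁻¹ = (t * a * t⁻¹) * (t * b * t⁻¹) := by group
      rw [this]; exact Subgroup.mul_mem _ ha hb
  | inv a _ ha =>
      have : t * a⁻¹ * t⁻¹ = (t * a * t⁻¹)⁻¹ := by group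
      rw [this]; exact Subgroup.inv_mem _ ha

lemma conjK_zpow (p : ℕ) (n : ℤ) {k : Equiv.Perm (ZMod p × ZMod p)} (hk : k ∈ Ksub p) :
    (tau p) ^ n * k * (tau p) ^ (-n) ∈ Ksub p := by
  induction n using Int.induction_on with
  | zero => simpa using hk
  | succ n ih =>
      have h : (tau p) ^ (n + 1 : ℤ) * k * (tau p) ^ (-(n + 1 : ℤ)) =
          tau p * ((tau p) ^ (n : ℤ) * k * (tau p) ^ (-(n : ℤ))) * (tau p)⁻¹ := by group
      rw [h]
      exact conj_mem p (tau p) (fun i => ⟨1 + i, conj_sigma p i⟩) _ ih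
  | pred n ih =>
      have h : (tau p) ^ (-n - 1 : ℤ) * k * (tau p) ^ (-(-n - 1 : ℤ)) =
          (tau p)⁻¹ * ((tau p) ^ (-n : ℤ) * k * (tau p) ^ (-(-n : ℤ))) * tau p := by group
      rw [h]
      refine conj_mem p (tau p)⁻¹ (fun i => ⟨-1 + i, ?_⟩) _ ih
      simpa using conj_sigma' p i

lemma S_decomp (p : ℕ) {x : Equiv.Perm (ZMod p × ZMod p)} (hx : x ∈ Ssub p) :
    ∃ k ∈ Ksub p, ∃ n : ℤ, x = k * (tau p) ^ n := by
  induction hx using Subgroup.closure_induction with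
  | mem y hy =>
      rcases hy with rfl | ⟨i, rfl⟩
      · exact ⟨1, Subgroup.one_mem _, 1, by simp⟩
      · exact ⟨sigma p i, Subgroup.subset_closure ⟨i, rfl⟩, 0, by simp⟩
  | one => exact ⟨1, Subgroup.one_mem _, 0, by simp⟩
  | mul a b _ _ ha hb =>
      obtain ⟨k, hk, m, rfl⟩ := ha
      obtain ⟨k', hk', n, rfl⟩ := hb
      refine ⟨k * ((tau p) ^ m * k' * (tau p) ^ (-m)), ?_, m + n, by group⟩
      exact Subgroup.mul_mem _ hk (conjK_zpow p m hk')
  | inv a _ ha =>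
      obtain ⟨k, hk, m, rfl⟩ := ha
      refine ⟨(tau p) ^ (-m) * k⁻¹ * (tau p) ^ (-(-m)), ?_, -m, by group⟩
      exact conjK_zpow p (-m) (Subgroup.inv_mem _ hk)

lemma tau_zpow_eq_one (p : ℕ) {n : ℤ} (h : ((n : ℤ) : ZMod p) = 0) : (tau p) ^ n = 1 := by
  refine Equiv.ext fun pt => ?_
  rw [tau_zpow, h, add_zero]
  rfl

/-- every element of S − K acts on the p² points without fixed points. -/
theorem stmt0 (p : ℕ) [Fact p.Prime] :
    ∀ x : Equiv.Perm (ZMod p × ZMod p), x ∈ Ssub p → x ∉ Ksub p →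
      ∀ pt : ZMod p × ZMod p, x pt ≠ pt := by
  intro x hx hxK pt hfix
  obtain ⟨k, hk, n, rfl⟩ := S_decomp p hx
  have h1 : ((k * (tau p) ^ n) pt).1 = pt.1 + (n : ZMod p) := by
    rw [Equiv.Perm.mul_apply, K_fst p hk, tau_zpow]
  rw [hfix] at h1
  have hn : ((n : ℤ) : ZMod p) = 0 := by
    have h2 : pt.1 + (n : ZMod p) = pt.1 + 0 := by rw [add_zero]; exact h1.symm
    exact add_left_cancel h2
  rw [tau_zpow_eq_one p hn, mul_one] at hxK
  exact hxK hk
end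

section
/- Let p be a prime and let S ≅ Z/p ≀ Z/p be the p-Sylow subgroup of Σ_{p²} with base K generated by disjoint p-cycles σ_0,…,σ_{p−1} and top cycle τ. Every element of S − K is either a p²-cycle or a product of p disjoint p-cycles (as a permutation of {1,…,p²}). -/
/-- The subgroup of "affine" permutations. -/
def Gsub (p : ℕ) : Subgroup (Equiv.Perm (ZMod p × ZMod p)) where
  carrier := {x | ∃ n : ZMod p, ∃ f : ZMod p → ZMod p,
    ∀ y : ZMod p × ZMod p, x y = (y.1 + n, y.2 + f y.1)}
  one_mem' := ⟨0, 0, fun y => by simp⟩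
  mul_mem' := by
    rintro x x' ⟨n, f, hx⟩ ⟨n', f', hx'⟩
    refine ⟨n' + n, fun a => f' a + f (a + n'), fun y => ?_⟩
    simp only [Equiv.Perm.mul_apply, hx', hx, Prod.mk.injEq]
    constructor <;> ring
  inv_mem' := by
    rintro x ⟨n, f, hx⟩
    refine ⟨-n, fun a => -(f (a + -n)), fun y => ?_⟩
    have : x⁻¹ y = x.symm y := rfl
    rw [this, Equiv.symm_apply_eq, hx]
    simp

theorem Ssub_le_Gsub (p : ℕ) : Ssub p ≤ Gsub p := by
  rw [Ssub, Subgroup.closure_le]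
  rintro x (rfl | ⟨i, rfl⟩)
  · exact ⟨1, 0, fun y => by
      cases y with
      | mk a b => simp [tau, Equiv.prodCongr_apply, Prod.map, add_comm]⟩
  · refine ⟨0, fun a => if a = i then 1 else 0, fun y => ?_⟩
    simp only [sigma, Equiv.coe_fn_mk, Prod.mk.injEq]
    constructor
    · simp
    · by_cases h : y.1 = i <;> simp [h]

theorem sigma_pow (p : ℕ) (i : ZMod p) (k : ℕ) (y : ZMod p × ZMod p) :
    ((sigma p i) ^ k) y = (y.1, y.2 + if y.1 = i then (k : ZMod p) else 0) := by
  induction k with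
  | zero => simp
  | succ k ih =>
    rw [pow_succ', Equiv.Perm.mul_apply, ih]
    simp only [sigma, Equiv.coe_fn_mk, Prod.mk.injEq]
    by_cases h : y.1 = i <;> simp [h] <;> push_cast <;> ring

theorem commute_sigma_pow (p : ℕ) (f : ZMod p → ZMod p) :
    ∀ i j : ZMod p, i ≠ j →
      Commute ((sigma p i) ^ (f i).val) ((sigma p j) ^ (f j).val) := by
  intro i j hij
  apply Commute.pow_pow
  refine Equiv.ext fun y => ?_
  simp only [Equiv.Perm.mul_apply, sigma, Equiv.coe_fn_mk]
  by_cases h : y.1 = i <;> by_cases h' : y.1 = j <;>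
    simp [h, h', hij, Ne.symm hij]

theorem noncommProd_sigma_pow (p : ℕ) [NeZero p] (f : ZMod p → ZMod p)
    (s : Finset (ZMod p)) (comm) (y : ZMod p × ZMod p) :
    (s.noncommProd (fun i => (sigma p i) ^ (f i).val) comm) y =
      (y.1, y.2 + ∑ i ∈ s, if y.1 = i then f i else 0) := by
  induction s using Finset.induction with
  | empty => simp
  | insert a s hns ih =>
    rw [Finset.noncommProd_insert_of_notMem _ _ _ _ hns, Equiv.Perm.mul_apply,
      ih, sigma_pow, Finset.sum_insert hns]
    simp only [Prod.mk.injEq, true_and]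
    rw [ZMod.natCast_val, ZMod.cast_id]
    by_cases h : y.1 = a <;> simp [h] <;> ring

theorem mem_Ksub_of_shape (p : ℕ) [NeZero p] (x : Equiv.Perm (ZMod p × ZMod p))
    (f : ZMod p → ZMod p) (hx : ∀ y : ZMod p × ZMod p, x y = (y.1, y.2 + f y.1)) :
    x ∈ Ksub p := by
  have comm : ((Finset.univ : Finset (ZMod p)) : Set (ZMod p)).Pairwise
      (fun i j => Commute ((sigma p i) ^ (f i).val) ((sigma p j) ^ (f j).val)) :=
    fun i _ j _ hij => commute_sigma_pow p f i j hij
  have hxe : x = Finset.univ.noncommProd (fun i => (sigma p i) ^ (f i).val) comm := by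
    refine Equiv.ext fun y => ?_
    rw [hx, noncommProd_sigma_pow]
    simp [Finset.sum_ite_eq]
  rw [hxe]
  exact Subgroup.noncommProd_mem _ _ fun i _ =>
    Subgroup.pow_mem _ (Subgroup.subset_closure (Set.mem_range_self i)) _

theorem pow_shape (p : ℕ) (x : Equiv.Perm (ZMod p × ZMod p)) (n : ZMod p)
    (f : ZMod p → ZMod p) (hx : ∀ y : ZMod p × ZMod p, x y = (y.1 + n, y.2 + f y.1))
    (m : ℕ) (y : ZMod p × ZMod p) :
    (x ^ m) y = (y.1 + m • n, y.2 + ∑ k ∈ Finset.range m, f (y.1 + k • n)) := by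
  induction m with
  | zero => simp
  | succ m ih =>
    rw [pow_succ', Equiv.Perm.mul_apply, ih, hx, Finset.sum_range_succ, succ_nsmul]
    simp only [Prod.mk.injEq]
    constructor <;> ring

theorem sum_reindex (p : ℕ) [Fact p.Prime] (n : ZMod p) (hn : n ≠ 0)
    (f : ZMod p → ZMod p) (b : ZMod p) :
    ∑ k ∈ Finset.range p, f (b + k • n) = ∑ a : ZMod p, f a := by
  haveI : NeZero p := ⟨(Fact.out : p.Prime).ne_zero⟩
  have key : ∑ k ∈ Finset.range p, f (b + (k : ZMod p) * n) = ∑ a : ZMod p, f a := by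
    refine Finset.sum_nbij' (fun k => b + (k : ZMod p) * n)
      (fun a => ((a - b) * n⁻¹).val) ?_ ?_ ?_ ?_ ?_
    · intro k _; exact Finset.mem_univ _
    · intro a _; exact Finset.mem_range.mpr (ZMod.val_lt _)
    · intro k hk
      have h1 : ((b + (k : ZMod p) * n - b) * n⁻¹) = (k : ZMod p) := by
        field_simp
        ring
      rw [h1, ZMod.val_cast_of_lt (Finset.mem_range.mp hk)]
    · intro a _
      rw [ZMod.natCast_val, ZMod.cast_id]
      field_simp
      ring
    · intro k _
      rfl
  rw [← key]
  refine Finset.sum_congr rfl fun k _ => ?_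
  rw [nsmul_eq_mul]

/-- every element of S − K is a p²-cycle or a product of p disjoint p-cycles. -/
theorem stmt1 (p : ℕ) [Fact p.Prime] :
    ∀ x : Equiv.Perm (ZMod p × ZMod p), x ∈ Ssub p → x ∉ Ksub p →
      x.cycleType = {p ^ 2} ∨ x.cycleType = Multiset.replicate p p := by
  intro x hxS hxK
  have hp : p.Prime := Fact.out
  haveI : NeZero p := ⟨hp.ne_zero⟩
  obtain ⟨n, f, hx⟩ := Ssub_le_Gsub p hxS
  have hn : n ≠ 0 := by
    intro h
    exact hxK (mem_Ksub_of_shape p x f (fun y => by rw [hx]; simp [h]))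
  have hsupp : x.support = Finset.univ := by
    rw [Finset.eq_univ_iff_forall]
    intro y
    rw [Equiv.Perm.mem_support, hx]
    intro h
    have := congrArg Prod.fst h
    simp only at this
    exact hn (by simpa using this)
  have hcard : x.support.card = p * p := by
    rw [hsupp, Finset.card_univ, Fintype.card_prod, ZMod.card]
  set c : ZMod p := ∑ a : ZMod p, f a with hc
  have hxp : ∀ y : ZMod p × ZMod p, (x ^ p) y = (y.1, y.2 + c) := by
    intro y
    rw [pow_shape p x n f hx]
    congr 1
    · rw [nsmul_eq_mul, ZMod.natCast_self, zero_mul, add_zero]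
    · rw [sum_reindex p n hn]
  by_cases hc0 : c = 0
  · -- order p case
    right
    have hxp1 : x ^ p = 1 := Equiv.ext fun y => by simp [hxp, hc0]
    have hx1 : x ≠ 1 := by
      intro h
      apply hn
      have := congrArg
        (fun g : Equiv.Perm (ZMod p × ZMod p) => (g ((0 : ZMod p), (0 : ZMod p))).1) h
      simpa [hx] using this
    have hord : orderOf x = p := by
      have hdvd := orderOf_dvd_of_pow_eq_one hxp1
      rcases (Nat.dvd_prime hp).mp hdvd with h1 | h
      · exact absurd (orderOf_eq_one_iff.mp h1) hx1
      · exact h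
    have hprime : (orderOf x).Prime := by rw [hord]; exact hp
    obtain ⟨m, hm⟩ := Equiv.Perm.cycleType_prime_order hprime
    rw [hord] at hm
    have hsum := x.sum_cycleType
    rw [hm, Multiset.sum_replicate, smul_eq_mul, hcard] at hsum
    have : m + 1 = p := Nat.eq_of_mul_eq_mul_right hp.pos hsum
    rw [hm, this]
  · -- p² cycle case
    left
    have key : ∀ m : ℕ, ∀ y : ZMod p × ZMod p, ((x ^ p) ^ m) y = (y.1, y.2 + m • c) := by
      intro m
      induction m with
      | zero => intro y; simp
      | succ m ih =>
        intro y
        rw [pow_succ', Equiv.Perm.mul_apply, ih, hxp, succ_nsmul]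
        simp only [Prod.mk.injEq, true_and]
        ring
    have hxpp : x ^ p ^ 2 = 1 := by
      rw [sq, pow_mul]
      exact Equiv.ext fun y => by simp [key, nsmul_eq_mul, ZMod.natCast_self]
    have hxpne : x ^ p ≠ 1 := by
      intro h
      apply hc0
      have := congrArg
        (fun g : Equiv.Perm (ZMod p × ZMod p) => (g ((0 : ZMod p), (0 : ZMod p))).2) h
      simpa [hxp] using this
    have hdvd2 : ∀ a ∈ x.cycleType, a ∣ p ^ 2 := by
      intro a ha
      calc a ∣ x.cycleType.lcm := Multiset.dvd_lcm ha
        _ = orderOf x := x.lcm_cycleType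
        _ ∣ p ^ 2 := orderOf_dvd_of_pow_eq_one hxpp
    have hex : (p ^ 2 : ℕ) ∈ x.cycleType := by
      by_contra hne
      have hall : ∀ a ∈ x.cycleType, a ∣ p := by
        intro a ha
        obtain ⟨i, hi, rfl⟩ := (Nat.dvd_prime_pow hp).mp (hdvd2 a ha)
        interval_cases i
        · simp
        · simp
        · exact absurd ha hne
      have : orderOf x ∣ p := by
        rw [← x.lcm_cycleType]
        exact Multiset.lcm_dvd.mpr hall
      exact hxpne (orderOf_dvd_iff_pow_eq_one.mp this)
    have hcons := Multiset.cons_erase hex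
    have hsum := x.sum_cycleType
    rw [← hcons, Multiset.sum_cons, hcard] at hsum
    have hrest : (x.cycleType.erase (p ^ 2)).sum = 0 := by
      have hpp : p ^ 2 = p * p := sq p
      omega
    have hrest0 : x.cycleType.erase (p ^ 2) = 0 := by
      rw [Multiset.eq_zero_iff_forall_notMem]
      intro a ha
      have h2 : 2 ≤ a := Equiv.Perm.two_le_of_mem_cycleType (Multiset.mem_of_mem_erase ha)
      have := Multiset.sum_eq_zero_iff.mp hrest a ha
      omega
    rw [← hcons, hrest0]
    rfl
end

section
/- For x = σ_0^{a_0}⋯σ_{p−1}^{a_{p−1}} τ^a in S − K (so a ≢ 0 mod p), write λ(x) = a_0 + ⋯ + a_{p−1} and μ(x) = a. Two elements x, y ∈ S − K are conjugate in S if and only if μ(x) = μ(y) and λ(x) ≡ λ(y) (mod p). -/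
/-- The element `σ₀^{a 0} ⋯ σ_{p-1}^{a (p-1)} · τ^b` of the Sylow `p`-subgroup
`S = Z/p ≀ Z/p ≤ Σ_{p²}`, acting on `{1,…,p²}` identified with `ZMod p × ZMod p`
via `lp + (k+1) ↦ (l, k)`.  It sends `(l,k)` to `(l + b, k + a (l + b))`. -/
def elt (p : ℕ) (a : ZMod p → ZMod p) (b : ZMod p) : Equiv.Perm (ZMod p × ZMod p) where
  toFun x := (x.1 + b, x.2 + a (x.1 + b))
  invFun x := (x.1 - b, x.2 - a x.1)
  left_inv x := by simp
  right_inv x := by simp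

lemma conj_formula (p : ℕ) (a e : ZMod p → ZMod p) (b g : ZMod p) :
    elt p e g * elt p a b * (elt p e g)⁻¹
      = elt p (fun t => a (t - g) - e (t - b) + e t) b := by
  ext x
  · simp only [elt, Equiv.Perm.mul_apply, Equiv.Perm.inv_def, Equiv.coe_fn_mk,
      Equiv.coe_fn_symm_mk]
    ring
  · simp only [elt, Equiv.Perm.mul_apply, Equiv.Perm.inv_def, Equiv.coe_fn_mk,
      Equiv.coe_fn_symm_mk]
    ring_nf

lemma elt_inj (p : ℕ) (A c : ZMod p → ZMod p) (b d : ZMod p) (h : elt p A b = elt p c d) :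
    b = d ∧ A = c := by
  have h1 := fun x => congrArg (fun f : Equiv.Perm (ZMod p × ZMod p) => f x) h
  simp [elt] at h1
  have hbd : b = d := (h1 0).1
  refine ⟨hbd, funext fun t => ?_⟩
  have := (h1 (t - b)).2
  rwa [sub_add_cancel, hbd, sub_add_cancel] at this

lemma exists_e (p : ℕ) [Fact p.Prime] (b : ZMod p) (hb : b ≠ 0) (f : ZMod p → ZMod p)
    (hf : ∑ i : ZMod p, f i = 0) : ∃ e : ZMod p → ZMod p, ∀ t, e t - e (t - b) = f t := by
  refine ⟨fun t => ∑ j ∈ Finset.range ((t * b⁻¹).val + 1), f ((j : ZMod p) * b), fun t => ?_⟩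
  have hcast : ∀ s : ZMod p, ((s.val : ZMod p)) = s := ZMod.natCast_rightInverse
  have hib : b⁻¹ * b = 1 := inv_mul_cancel₀ hb
  have hsub : (t - b) * b⁻¹ = t * b⁻¹ - 1 := by field_simp
  rcases Nat.eq_zero_or_eq_succ_pred ((t * b⁻¹).val) with h0 | hsucc
  · -- t = 0
    have ht0 : t * b⁻¹ = 0 := by rw [← hcast (t * b⁻¹), h0]; simp
    have ht : t = 0 := by
      have := congrArg (· * b) ht0
      simpa [mul_assoc, hib] using this
    have hneg : (t - b) * b⁻¹ = -1 := by rw [hsub, ht0]; ring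
    have hval : ((t - b) * b⁻¹).val = p - 1 := by
      rw [hneg]
      rcases p with _ | n
      · exact absurd (Fact.out : (0:ℕ).Prime) (by norm_num)
      · simpa using ZMod.val_neg_one n
    dsimp only
    rw [h0, hval]
    have hp1 : p - 1 + 1 = p := Nat.succ_pred_eq_of_pos (Fact.out : p.Prime).pos
    rw [hp1]
    have hsum : ∑ j ∈ Finset.range p, f ((j : ZMod p) * b) = 0 := by
      have h1 : ∑ j ∈ Finset.range p, f ((j : ZMod p) * b) = ∑ i : ZMod p, f (i * b) := by
        refine Finset.sum_nbij' (i := fun j : ℕ => ((j : ZMod p)))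
          (j := fun i : ZMod p => i.val) ?_ ?_ ?_ ?_ ?_
        · intros; simp
        · intro i _; exact Finset.mem_range.mpr (ZMod.val_lt i)
        · intro j hj; exact ZMod.val_cast_of_lt (Finset.mem_range.mp hj)
        · intro i _; exact hcast i
        · intros; rfl
      have h2 : ∑ i : ZMod p, f (i * b) = ∑ i : ZMod p, f i := by
        apply Fintype.sum_equiv (Equiv.mulRight₀ b hb)
        intro i; rfl
      rw [h1, h2, hf]
    rw [hsum, ht]
    simp
  · set m := (t * b⁻¹).val - 1 with hm
    have hval : (t * b⁻¹).val = m + 1 := hsucc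
    have hlt : m + 1 < p := hval ▸ ZMod.val_lt (t * b⁻¹)
    have hcast2 : ((m : ZMod p)) + 1 = t * b⁻¹ := by
      rw [← hcast (t * b⁻¹), hval]; push_cast; ring
    have hval2 : ((t - b) * b⁻¹).val = m := by
      rw [hsub, ← hcast2]
      simpa using ZMod.val_cast_of_lt (lt_trans (Nat.lt_succ_self m) hlt)
    dsimp only
    rw [hval, hval2, Finset.sum_range_succ]
    have : ((m + 1 : ℕ) : ZMod p) * b = t := by
      push_cast
      rw [hcast2, mul_assoc, hib, mul_one]
    rw [add_sub_cancel_left, this]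

/-- two elements `x = σ^a τ^b`, `y = σ^c τ^d` of `S − K` are conjugate in `S`
iff `μ(x) = μ(y)` and `λ(x) ≡ λ(y) (mod p)`.  (Every element of `S` is of the form
`elt e g`, so conjugacy in `S` is conjugacy by some `elt e g`.) -/
theorem stmt2 (p : ℕ) [Fact p.Prime] (a c : ZMod p → ZMod p) (b d : ZMod p)
    (hb : b ≠ 0) (hd : d ≠ 0) :
    (∃ (e : ZMod p → ZMod p) (g : ZMod p),
        elt p e g * elt p a b * (elt p e g)⁻¹ = elt p c d) ↔
      (b = d ∧ ∑ i : ZMod p, a i = ∑ i : ZMod p, c i) := by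
  constructor
  · rintro ⟨e, g, h⟩
    rw [conj_formula] at h
    obtain ⟨hbd, hAc⟩ := elt_inj p _ c b d h
    refine ⟨hbd, ?_⟩
    have hc : ∑ i : ZMod p, c i = ∑ i : ZMod p, (a (i - g) - e (i - b) + e i) := by
      rw [← hAc]
    have h1 : ∑ i : ZMod p, a (i - g) = ∑ i : ZMod p, a i :=
      Fintype.sum_equiv (Equiv.subRight g) _ _ fun i => rfl
    have h2 : ∑ i : ZMod p, e (i - b) = ∑ i : ZMod p, e i :=
      Fintype.sum_equiv (Equiv.subRight b) _ _ fun i => rfl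
    rw [hc, Finset.sum_add_distrib, Finset.sum_sub_distrib, h1, h2]
    ring
  · rintro ⟨rfl, hsum⟩
    obtain ⟨e, he⟩ := exists_e p b hb (fun i => c i - a i) (by
      rw [Finset.sum_sub_distrib, hsum]; ring)
    refine ⟨e, 0, ?_⟩
    rw [conj_formula]
    congr 1
    funext t
    simp only [sub_zero]
    linear_combination he t
end

section
/- Let x = σ_0^{a_0}⋯σ_{p−1}^{a_{p−1}} τ^a ∈ S − K (a ≢ 0 mod p), viewed as a permutation of {1,…,p²}. Then x is a product of p disjoint p-cycles if and only if a_0 + ⋯ + a_{p−1} ≡ 0 (mod p); otherwise x is a p²-cycle. -/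
lemma elt_apply (p : ℕ) (a : ZMod p → ZMod p) (b : ZMod p) (x : ZMod p × ZMod p) :
    elt p a b x = (x.1 + b, x.2 + a (x.1 + b)) := rfl

lemma elt_pow (p : ℕ) (a : ZMod p → ZMod p) (b : ZMod p) (n : ℕ) :
    elt p a b ^ n = elt p (fun l => ∑ j ∈ Finset.range n, a (l - j • b)) (n • b) := by
  induction n with
  | zero => ext x <;> simp [elt_apply]
  | succ n ih =>
      rw [pow_succ, ih]
      ext x
      · simp only [elt_apply, Equiv.Perm.mul_apply, succ_nsmul]; ring
      · simp only [elt_apply, Equiv.Perm.mul_apply, Finset.sum_range_succ, succ_nsmul]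
        have hs : ∑ j ∈ Finset.range n, a (x.1 + (n • b + b) - j • b)
            = ∑ j ∈ Finset.range n, a (x.1 + b + n • b - j • b) :=
          Finset.sum_congr rfl fun j _ => by congr 1; ring
        rw [hs, show x.1 + (n • b + b) - n • b = x.1 + b from by ring]; ring

lemma sum_zmod {M : Type*} [AddCommMonoid M] (p : ℕ) [NeZero p] (f : ZMod p → M) :
    ∑ j ∈ Finset.range p, f j = ∑ i : ZMod p, f i := by
  rw [← Fin.sum_univ_eq_sum_range]
  have hinj : Function.Injective (fun j : Fin p => ((j : ℕ) : ZMod p)) := by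
    intro j k h
    dsimp only at h
    exact Fin.ext (by rw [← ZMod.val_cast_of_lt j.isLt, ← ZMod.val_cast_of_lt k.isLt, h])
  have hbij : Function.Bijective (fun j : Fin p => ((j : ℕ) : ZMod p)) :=
    (Fintype.bijective_iff_injective_and_card _).2 ⟨hinj, by simp [ZMod.card]⟩
  exact Fintype.sum_bijective _ hbij (fun i => f ((i : ℕ) : ZMod p)) f fun j => rfl

lemma sum_shift (p : ℕ) [Fact p.Prime] (a : ZMod p → ZMod p) (b : ZMod p) (hb : b ≠ 0)
    (l : ZMod p) : ∑ j ∈ Finset.range p, a (l - j • b) = ∑ i : ZMod p, a i := by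
  have h1 : ∑ j ∈ Finset.range p, a (l - j • b)
      = ∑ j ∈ Finset.range p, (fun i : ZMod p => a (l - i * b)) (j : ℕ) := by
    refine Finset.sum_congr rfl fun j _ => by simp [nsmul_eq_mul]
  rw [h1, sum_zmod p (fun i : ZMod p => a (l - i * b))]
  exact Equiv.sum_comp ((Equiv.mulRight₀ b hb).trans (Equiv.subLeft l)) a

lemma elt_pow_p (p : ℕ) [Fact p.Prime] (a : ZMod p → ZMod p) (b : ZMod p) (hb : b ≠ 0) :
    elt p a b ^ p = elt p (fun _ => ∑ i : ZMod p, a i) 0 := by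
  rw [elt_pow]
  have h1 : (p • b : ZMod p) = 0 := by simp [nsmul_eq_mul, ZMod.natCast_self]
  rw [h1]
  congr 1
  funext l
  exact sum_shift p a b hb l


/-- for `x = σ^a τ^b ∈ S − K` (i.e. `b ≠ 0`), `x` is a product of `p`
disjoint `p`-cycles iff `λ(x) = a₀ + ⋯ + a_{p−1} ≡ 0 (mod p)`; otherwise `x` is a
`p²`-cycle. -/
theorem stmt3 (p : ℕ) [Fact p.Prime] (a : ZMod p → ZMod p) (b : ZMod p) (hb : b ≠ 0) :
    ((elt p a b).cycleType = Multiset.replicate p p ↔ ∑ i : ZMod p, a i = 0) ∧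
      ((∑ i : ZMod p, a i) ≠ 0 → (elt p a b).cycleType = {p ^ 2}) := by
  have hp : p.Prime := Fact.out
  set s := ∑ i : ZMod p, a i with hs
  set x := elt p a b with hx
  have hxp : x ^ p = elt p (fun _ => s) 0 := elt_pow_p p a b hb
  have hx1 : x ≠ 1 := by
    intro h
    have h0 := congrArg (fun f : Equiv.Perm (ZMod p × ZMod p) => (f (0, 0)).1) h
    simp [hx, elt_apply] at h0
    exact hb h0
  have hfix : ∀ y, x y ≠ y := by
    intro y h
    apply hb
    have h1 : y.1 + b = y.1 := congrArg Prod.fst h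
    exact add_eq_left.mp h1
  have hcard : x.support.card = p ^ 2 := by
    have hsupp : x.support = Finset.univ := by
      ext y; simp [Equiv.Perm.mem_support, hfix y]
    rw [hsupp, Finset.card_univ]
    simp [ZMod.card, sq]
  have hsum : x.cycleType.sum = p ^ 2 := by rw [Equiv.Perm.sum_cycleType, hcard]
  have h2 : s ≠ 0 → x.cycleType = {p ^ 2} := by
    intro hs0
    have hxp1 : x ^ p ≠ 1 := by
      rw [hxp]; intro h
      have h0 := congrArg (fun f : Equiv.Perm (ZMod p × ZMod p) => (f (0, 0)).2) h
      simp [elt_apply] at h0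
      exact hs0 h0
    have hxpp : x ^ p ^ 2 = 1 := by
      rw [sq, pow_mul, hxp, elt_pow]
      ext y <;>
        simp [elt_apply, nsmul_eq_mul, ZMod.natCast_self, Finset.sum_const]
    have hord : orderOf x = p ^ 2 := by
      rcases (Nat.dvd_prime_pow hp).1 (orderOf_dvd_of_pow_eq_one hxpp) with ⟨k, hk, hke⟩
      interval_cases k
      · exact absurd (orderOf_eq_one_iff.1 (by simpa using hke)) hx1
      · exfalso
        apply hxp1
        have := pow_orderOf_eq_one x
        rwa [hke, pow_one] at this
      · exact hke
    have hlcm := x.lcm_cycleType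
    have hmem : (p ^ 2 : ℕ) ∈ x.cycleType := by
      by_contra hmem
      have hall : ∀ n ∈ x.cycleType, n ∣ p := by
        intro n hn
        have hd : n ∣ p ^ 2 := by
          rw [← hord, ← hlcm]; exact Multiset.dvd_lcm hn
        rcases (Nat.dvd_prime_pow hp).1 hd with ⟨k, hk, rfl⟩
        interval_cases k
        · exact absurd (Equiv.Perm.two_le_of_mem_cycleType hn) (by norm_num)
        · simp
        · exact absurd hn hmem
      have hdl : x.cycleType.lcm ∣ p := Multiset.lcm_dvd.2 hall
      rw [hlcm, hord] at hdl
      have := Nat.le_of_dvd hp.pos hdl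
      nlinarith [hp.two_le]
    obtain ⟨c, hc⟩ := Multiset.exists_cons_of_mem hmem
    have hc0 : c.sum = 0 := by
      have h3 := hsum; rw [hc, Multiset.sum_cons] at h3; omega
    have hcz : c = 0 := by
      by_contra hne
      obtain ⟨n, hn⟩ := Multiset.exists_mem_of_ne_zero hne
      have h2n : 2 ≤ n :=
        Equiv.Perm.two_le_of_mem_cycleType (by rw [hc]; exact Multiset.mem_cons_of_mem hn)
      have := Multiset.single_le_sum (fun y _ => Nat.zero_le y) n hn
      omega
    rw [hc, hcz]; rfl
  have h1 : s = 0 → x.cycleType = Multiset.replicate p p := by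
    intro hs0
    have hxp1 : x ^ p = 1 := by
      rw [hxp, hs0]; ext y <;> simp [elt_apply]
    have hord : orderOf x = p := by
      rcases hp.eq_one_or_self_of_dvd _ (orderOf_dvd_of_pow_eq_one hxp1) with h | h
      · exact absurd (orderOf_eq_one_iff.1 h) hx1
      · exact h
    have hall : ∀ n ∈ x.cycleType, n = p := by
      intro n hn
      have hd : n ∣ p := by rw [← hord, ← x.lcm_cycleType]; exact Multiset.dvd_lcm hn
      rcases hp.eq_one_or_self_of_dvd _ hd with h | h
      · exact absurd (Equiv.Perm.two_le_of_mem_cycleType hn) (by omega)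
      · exact h
    have hrep : x.cycleType = Multiset.replicate x.cycleType.card p :=
      Multiset.eq_replicate_card.2 hall
    have hcardc : x.cycleType.card = p := by
      have h3 := hsum
      rw [hrep, Multiset.sum_replicate, smul_eq_mul, sq] at h3
      exact Nat.eq_of_mul_eq_mul_right hp.pos h3
    rw [hrep, hcardc]
  refine ⟨⟨fun h => ?_, h1⟩, h2⟩
  by_contra hs0
  have h4 := h2 hs0
  rw [h] at h4
  have hmem : (p ^ 2 : ℕ) ∈ Multiset.replicate p p := by
    rw [h4]; exact Multiset.mem_singleton_self _
  have := Multiset.eq_of_mem_replicate hmem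
  nlinarith [hp.two_le]
end

section
/- Let D_8 be the dihedral group of order 8 with generators r (order 4) and s (order 2, srs = r^{−1}), viewed inside Σ_4 via r = (1,4,2,3), s = (1,2). Let 1, X, Y, XY, Z be the irreducible complex representations of D_8, where X, Y, XY are the nontrivial one-dimensional representations with kernels ⟨r⟩, ⟨s, r²⟩, ⟨sr, r²⟩ respectively and Z is the 2-dimensional irreducible. Then a virtual representation a·1 + b·X + c·Y + d·XY + e·Z of D_8 is Σ_4-invariant if and only if e = b + c. In particular {1, XY, X+Z, Y+Z} is a Z-basis of the group R_{Σ_4}(D_8) of Σ_4-invariant virtual representations. -/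
/-- The generator `r = (1,4,2,3)` of `D₈ ≤ Σ₄` (0-indexed: `(0,3,1,2)`). -/
def rD : Equiv.Perm (Fin 4) := c[0, 3, 1, 2]
/-- The generator `s = (1,2)` of `D₈ ≤ Σ₄`. -/
def sD : Equiv.Perm (Fin 4) := c[0, 1]

/-- The element `r^k s^j` of `D₈ = {r^k s^j}`, as a permutation in `Σ₄`. -/
def dElt (k : ZMod 4) (j : ZMod 2) : Equiv.Perm (Fin 4) := rD ^ k.val * sD ^ j.val

/-- The value at `r^k s^j` of the virtual character `a·1 + b·X + c·Y + d·XY + e·Z` of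
`D₈`, where `X, Y, XY` are the nontrivial one-dimensional representations with kernels
`⟨r⟩, ⟨s,r²⟩, ⟨sr,r²⟩` and `Z` is the two-dimensional irreducible representation. -/
def chiD8 (a b c d e : ℤ) (k : ZMod 4) (j : ZMod 2) : ℤ :=
  a + b * (-1) ^ j.val + c * (-1) ^ k.val + d * (-1) ^ (k.val + j.val) +
    e * (if j = 0 then (if k = 0 then 2 else if k = 2 then -2 else 0) else 0)

lemma kv0 : (0:ZMod 4).val = 0 := rfl
lemma kv1 : (1:ZMod 4).val = 1 := rfl
lemma kv2 : (2:ZMod 4).val = 2 := rfl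
lemma kv3 : (3:ZMod 4).val = 3 := rfl
lemma jv0 : (0:ZMod 2).val = 0 := rfl
lemma jv1 : (1:ZMod 2).val = 1 := rfl
lemma kn1 : (1:ZMod 4) ≠ 0 := by decide
lemma kn1' : (1:ZMod 4) ≠ 2 := by decide
lemma kn2 : (2:ZMod 4) ≠ 0 := by decide
lemma kn3 : (3:ZMod 4) ≠ 0 := by decide
lemma kn3' : (3:ZMod 4) ≠ 2 := by decide
lemma jn1 : (1:ZMod 2) ≠ 0 := by decide

lemma c00 (a b c d e : ℤ) : chiD8 a b c d e 0 0 = a+b+c+d+2*e := by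
  simp [chiD8, kv0, jv0]; ring
lemma c10 (a b c d e : ℤ) : chiD8 a b c d e 1 0 = a+b-c-d := by
  simp [chiD8, kv1, jv0, kn1, kn1']; ring
lemma c20 (a b c d e : ℤ) : chiD8 a b c d e 2 0 = a+b+c+d-2*e := by
  simp [chiD8, kv2, jv0, kn2]; ring
lemma c30 (a b c d e : ℤ) : chiD8 a b c d e 3 0 = a+b-c-d := by
  simp [chiD8, kv3, jv0, kn3, kn3']; ring
lemma c01 (a b c d e : ℤ) : chiD8 a b c d e 0 1 = a-b+c-d := by
  simp [chiD8, kv0, jv1, jn1]; ring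
lemma c11 (a b c d e : ℤ) : chiD8 a b c d e 1 1 = a-b-c+d := by
  simp [chiD8, kv1, jv1, jn1]; ring
lemma c21 (a b c d e : ℤ) : chiD8 a b c d e 2 1 = a-b+c-d := by
  simp [chiD8, kv2, jv1, jn1]; ring
lemma c31 (a b c d e : ℤ) : chiD8 a b c d e 3 1 = a-b-c+d := by
  simp [chiD8, kv3, jv1, jn1]; ring

lemma conj2031 : IsConj (dElt 2 0) (dElt 3 1) := by
  rw [isConj_iff]
  exact ⟨c[(1:Fin 4),3,2], by decide⟩

lemma zmod4_cases : ∀ k : ZMod 4, k = 0 ∨ k = 1 ∨ k = 2 ∨ k = 3 := by decide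
lemma zmod2_cases : ∀ j : ZMod 2, j = 0 ∨ j = 1 := by decide

set_option maxHeartbeats 2000000 in
set_option maxRecDepth 10000 in
lemma inv_of_eq (a b c d e : ℤ) (h : e = b + c) :
    ∀ (k k' : ZMod 4) (j j' : ZMod 2), IsConj (dElt k j) (dElt k' j') →
      chiD8 a b c d e k j = chiD8 a b c d e k' j' := by
  intro k k' j j' hc
  rw [Equiv.Perm.isConj_iff_cycleType_eq] at hc
  rcases zmod4_cases k with rfl|rfl|rfl|rfl <;>
    rcases zmod4_cases k' with rfl|rfl|rfl|rfl <;>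
    rcases zmod2_cases j with rfl|rfl <;>
    rcases zmod2_cases j' with rfl|rfl <;>
    first
      | exact absurd hc (by decide)
      | (simp only [c00, c10, c20, c30, c01, c11, c21, c31]; try omega)

lemma main_iff (a b c d e : ℤ) :
    (∀ (k k' : ZMod 4) (j j' : ZMod 2), IsConj (dElt k j) (dElt k' j') →
        chiD8 a b c d e k j = chiD8 a b c d e k' j') ↔ e = b + c := by
  constructor
  · intro h
    have := h 2 3 0 1 conj2031
    rw [c20, c31] at this
    omega
  · exact inv_of_eq a b c d e

/-- a virtual representation `a·1 + b·X + c·Y + d·XY + e·Z` of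
`D₈ ≤ Σ₄` is `Σ₄`-invariant (its character is constant on `Σ₄`-conjugacy classes
intersected with `D₈`) iff `e = b + c`; and `{1, XY, X+Z, Y+Z}` is a `ℤ`-basis of the
group of `Σ₄`-invariant virtual representations. -/
theorem stmt19 :
    (∀ a b c d e : ℤ,
      ((∀ (k k' : ZMod 4) (j j' : ZMod 2), IsConj (dElt k j) (dElt k' j') →
          chiD8 a b c d e k j = chiD8 a b c d e k' j') ↔ e = b + c)) ∧
    (∀ a b c d e : ℤ,
      (∀ (k k' : ZMod 4) (j j' : ZMod 2), IsConj (dElt k j) (dElt k' j') →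
          chiD8 a b c d e k j = chiD8 a b c d e k' j') →
        ∃! n : ℤ × ℤ × ℤ × ℤ, ∀ (k : ZMod 4) (j : ZMod 2),
          chiD8 a b c d e k j =
            n.1 * chiD8 1 0 0 0 0 k j + n.2.1 * chiD8 0 0 0 1 0 k j +
              n.2.2.1 * chiD8 0 1 0 0 1 k j + n.2.2.2 * chiD8 0 0 1 0 1 k j) := by
  refine ⟨main_iff, ?_⟩
  intro a b c d e h
  have he : e = b + c := (main_iff a b c d e).mp h
  refine ⟨(a, d, b, c), ?_, ?_⟩
  · intro k j
    rcases zmod4_cases k with rfl|rfl|rfl|rfl <;>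
      rcases zmod2_cases j with rfl|rfl <;>
      simp only [c00, c10, c20, c30, c01, c11, c21, c31] <;> omega
  · rintro ⟨m1, m2, m3, m4⟩ hm
    have h1 := hm 0 0
    have h2 := hm 1 0
    have h3 := hm 2 0
    have h4 := hm 0 1
    simp only [c00, c10, c20, c01] at h1 h2 h3 h4
    simp only [Prod.mk.injEq]
    refine ⟨?_, ?_, ?_, ?_⟩ <;> omega
end
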